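/- Fix N ≥ 1. Let H⁺_d : ℝ^N × ℝ^N → ℝ be differentiable, F⁻_d, F⁺_d : ℝ^N × ℝ^N → ℝ^N arbitrary maps, and let ξ_Q : ℝ^N → ℝ^N and ξᵖ : ℝ^N × ℝ^N → ℝ^N be given. Assume infinitesimal invariance of the generalized discrete Lagrangian R_d(q, q', p') = p'·q' − H⁺_d(q, p'): for all q, q', p' ∈ ℝ^N, −D₁H⁺_d(q, p')·ξ_Q(q) + p'·ξ_Q(q') + ( q' − D₂H⁺_d(q, p') )·ξᵖ(q', p') = 0. Assume also the orthogonality condition F⁻_d(q, p')·ξ_Q(q) + F⁺_d(q, p')·ξᵖ(q', p') = 0 for all q, q', p' ∈ ℝ^N. Then whenever (q_k, p_k, q_{k+1}, p_{k+1}) satisfy the discrete equations q_{k+1} = D₂H⁺_d(q_k, p_{k+1}) − F⁺_d(q_k, p_{k+1}) and p_k = D₁H⁺_d(q_k, p_{k+1}) − F⁻_d(q_k, p_{k+1}), the momentum map is conserved: p_{k+1}·ξ_Q(q_{k+1}) = p_k·ξ_Q(q_k). (Discrete Noether's theorem for stochastic systems with forcing, Theorem 3.3, in infinitesimal form.) 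-/

import Mathlib

/- STATEMENT 3: Discrete Noether's theorem for stochastic systems with forcing
   (Theorem 3.3, in infinitesimal form). -/

noncomputable section
open scoped BigOperators

abbrev E (N : ℕ) : Type := EuclideanSpace ℝ (Fin N)

/-- Gradient with respect to the first argument. -/
noncomputable def D1 {N : ℕ} (H : E N × E N → ℝ) (x y : E N) : E N :=
  gradient (fun x' => H (x', y)) x

/-- Gradient with respect to the second argument. -/
noncomputable def D2 {N : ℕ} (H : E N × E N → ℝ) (x y : E N) : E N :=
  gradient (fun y' => H (x, y')) y

theorem discrete_noether_forced
    {N : ℕ} (hN : 1 ≤ N)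
    (Hd : E N × E N → ℝ) (hHd : Differentiable ℝ Hd)
    (Fminus Fplus : E N × E N → E N)
    (ξQ : E N → E N) (ξP : E N × E N → E N)
    -- infinitesimal invariance of R_d(q, q', p') = p'·q' − H⁺_d(q, p'):
    (hinv : ∀ q q' p' : E N,
      -(inner ℝ (D1 Hd q p') (ξQ q) : ℝ) + (inner ℝ p' (ξQ q') : ℝ)
        + (inner ℝ (q' - D2 Hd q p') (ξP (q', p')) : ℝ) = 0)
    -- orthogonality condition on the discrete forces:
    (horth : ∀ q q' p' : E N,
      (inner ℝ (Fminus (q, p')) (ξQ q) : ℝ) + (inner ℝ (Fplus (q, p')) (ξP (q', p')) : ℝ) = 0)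
    (qk pk qk1 pk1 : E N)
    (heq1 : qk1 = D2 Hd qk pk1 - Fplus (qk, pk1))
    (heq2 : pk = D1 Hd qk pk1 - Fminus (qk, pk1)) :
    (inner ℝ pk1 (ξQ qk1) : ℝ) = (inner ℝ pk (ξQ qk) : ℝ) := by
  have h1 := hinv qk qk1 pk1
  have h2 := horth qk qk1 pk1
  have hq : qk1 - D2 Hd qk pk1 = -(Fplus (qk, pk1)) := by
    rw [heq1]; abel
  rw [hq, inner_neg_left] at h1
  rw [heq2, inner_sub_left]
  linarith
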